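/- Let G be a finite group, B a free ℤ_p-module of finite rank with G-action, and A a ℤ_pG-submodule of B contained both in f·B and in e·B, where e = exp H^m(G,B) and f = exp H^{m+1}(G,A). Then there is a short exact sequence 0 → H^m(G,B) → H^m(G,B/A) → H^{m+1}(G,A) → 0; in particular the map H^m(G,B) → H^m(G,B/A) is injective and the connecting homomorphism H^m(G,B/A) → H^{m+1}(G,A) is surjective. -/

import Mathlib

namespace GroupCoh

variable (G : Type) [Group G] (M : Type) [AddCommGroup M] [DistribMulAction G M]

/-- Coboundary map on inhomogeneous cochains. -/
def d (m : ℕ) : ((Fin m → G) → M) →+ ((Fin (m + 1) → G) → M) where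
  toFun c := fun g => g 0 • c (fun i => g i.succ) +
    ∑ j : Fin (m + 1), ((-1 : ℤ) ^ ((j : ℕ) + 1)) • c (Fin.contractNth j (· * ·) g)
  map_zero' := by funext g; simp
  map_add' c₁ c₂ := by
    funext g
    simp only [Pi.add_apply, smul_add, Finset.sum_add_distrib]
    abel

/-- Cocycles. -/
def Zc (m : ℕ) : AddSubgroup ((Fin m → G) → M) := (d G M m).ker

/-- Coboundaries. -/
def Bc : (m : ℕ) → AddSubgroup ((Fin m → G) → M)
  | 0 => ⊥
  | (m + 1) => (d G M m).range

/-- Cohomology. -/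
def H (m : ℕ) : Type := Zc G M m ⧸ ((Bc G M m).addSubgroupOf (Zc G M m))

noncomputable instance (m : ℕ) : AddCommGroup (H G M m) :=
  QuotientAddGroup.Quotient.addCommGroup _

/-- Class of a cocycle. -/
def mkH (m : ℕ) (c : (Fin m → G) → M) (hc : c ∈ Zc G M m) : H G M m :=
  QuotientAddGroup.mk ⟨c, hc⟩

end GroupCoh

namespace GroupCohAux

open GroupCoh

variable {G : Type} [Group G]

theorem d_apply {M : Type} [AddCommGroup M] [DistribMulAction G M] (m : ℕ)
    (c : (Fin m → G) → M) (g : Fin (m + 1) → G) :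
    d G M m c g = g 0 • c (fun i => g i.succ) +
      ∑ j : Fin (m + 1), ((-1 : ℤ) ^ ((j : ℕ) + 1)) • c (Fin.contractNth j (· * ·) g) := rfl

theorem d_d {M : Type} [AddCommGroup M] [DistribMulAction G M] (m : ℕ)
    (c : (Fin m → G) → M) : d G M (m + 1) (d G M m c) = 0 := by
  let R : Rep ℤ G := Rep.ofDistribMulAction ℤ G M
  have key : ∀ (x : (Fin m → G) → M),
      (inhomogeneousCochains.d R (m+1)).hom ((inhomogeneousCochains.d R m).hom x) = 0 := by
    intro x
    have h := groupCohomology.inhomogeneousCochains.d_comp_d m R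
    exact congrArg (fun f => f.hom x) h
  have heq : ∀ n (x : (Fin n → G) → M),
      (d G M n x : (Fin (n+1) → G) → M) = (inhomogeneousCochains.d R n).hom x := fun n x => rfl
  rw [heq, heq]
  exact key c

variable {M N : Type} [AddCommGroup M] [DistribMulAction G M]
  [AddCommGroup N] [DistribMulAction G N]

theorem d_comp (φ : M →+ N) (hφ : ∀ (g : G) (x : M), φ (g • x) = g • φ x) (m : ℕ)
    (c : (Fin m → G) → M) :
    d G N m (fun x => φ (c x)) = fun x => φ (d G M m c x) := by
  funext g
  rw [d_apply, d_apply, map_add φ, hφ, map_sum φ]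
  congr 1
  exact Finset.sum_congr rfl fun j _ => (map_zsmul φ _ _).symm

theorem mem_Zc_iff (m : ℕ) (c : (Fin m → G) → M) : c ∈ Zc G M m ↔ d G M m c = 0 :=
  AddMonoidHom.mem_ker

theorem mem_Bc_succ_iff (m : ℕ) (c : (Fin (m + 1) → G) → M) :
    c ∈ Bc G M (m + 1) ↔ ∃ c', d G M m c' = c := Iff.rfl

theorem mem_Bc_zero_iff (c : (Fin 0 → G) → M) : c ∈ Bc G M 0 ↔ c = 0 :=
  AddSubgroup.mem_bot

theorem d_eq_zero_of_mem_Bc {m : ℕ} {c : (Fin m → G) → M} (hc : c ∈ Bc G M m) :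
    d G M m c = 0 := by
  cases m with
  | zero => rw [(mem_Bc_zero_iff c).1 hc]; exact map_zero _
  | succ k =>
    obtain ⟨c', rfl⟩ := (mem_Bc_succ_iff k c).1 hc
    exact d_d k c'

theorem Zc_map (φ : M →+ N) (hφ : ∀ (g : G) (x : M), φ (g • x) = g • φ x) (m : ℕ)
    {c : (Fin m → G) → M} (hc : c ∈ Zc G M m) : (fun x => φ (c x)) ∈ Zc G N m := by
  rw [mem_Zc_iff] at hc ⊢
  rw [d_comp φ hφ, hc]
  funext x
  exact map_zero φ

theorem Bc_map (φ : M →+ N) (hφ : ∀ (g : G) (x : M), φ (g • x) = g • φ x) (m : ℕ)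
    {c : (Fin m → G) → M} (hc : c ∈ Bc G M m) : (fun x => φ (c x)) ∈ Bc G N m := by
  cases m with
  | zero =>
    rw [mem_Bc_zero_iff] at hc ⊢
    subst hc; funext x; exact map_zero φ
  | succ k =>
    obtain ⟨c', rfl⟩ := (mem_Bc_succ_iff k c).1 hc
    exact ⟨fun x => φ (c' x), d_comp φ hφ k c'⟩

theorem Bc_lift (φ : M →+ N) (hφ : ∀ (g : G) (x : M), φ (g • x) = g • φ x)
    (hφs : Function.Surjective φ) (m : ℕ) {q : (Fin m → G) → N} (hq : q ∈ Bc G N m) :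
    ∃ c : (Fin m → G) → M, c ∈ Bc G M m ∧ (∀ x, φ (c x) = q x) ∧ d G M m c = 0 := by
  cases m with
  | zero =>
    refine ⟨0, AddSubgroup.mem_bot.2 rfl, ?_, map_zero _⟩
    intro x
    rw [(mem_Bc_zero_iff q).1 hq]
    exact map_zero φ
  | succ k =>
    obtain ⟨q', rfl⟩ := (mem_Bc_succ_iff k q).1 hq
    choose c' hc' using fun x => hφs (q' x)
    refine ⟨d G M k c', ⟨c', rfl⟩, ?_, d_d k c'⟩
    intro x
    have h3 : (fun y => φ (c' y)) = q' := funext hc'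
    have h4 := congrFun (d_comp φ hφ k c') x
    rw [h3] at h4
    exact h4.symm

theorem mkH_eq_zero_iff (m : ℕ) (c : (Fin m → G) → M) (hc : c ∈ Zc G M m) :
    mkH G M m c hc = 0 ↔ c ∈ Bc G M m := by
  erw [mkH, QuotientAddGroup.eq_zero_iff, AddSubgroup.mem_addSubgroupOf]

theorem mkH_eq_iff (m : ℕ) (c c' : (Fin m → G) → M) (hc : c ∈ Zc G M m)
    (hc' : c' ∈ Zc G M m) :
    mkH G M m c hc = mkH G M m c' hc' ↔ c' - c ∈ Bc G M m := by
  erw [mkH, mkH, QuotientAddGroup.eq, AddSubgroup.mem_addSubgroupOf]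
  have : ((-(⟨c, hc⟩ : Zc G M m) + ⟨c', hc'⟩ : Zc G M m) : (Fin m → G) → M) = c' - c := by
    simp [sub_eq_neg_add]
  rw [this]

theorem mkH_add (m : ℕ) (c c' : (Fin m → G) → M) (hc : c ∈ Zc G M m)
    (hc' : c' ∈ Zc G M m) (h : c + c' ∈ Zc G M m) :
    mkH G M m (c + c') h = mkH G M m c hc + mkH G M m c' hc' := rfl

theorem mkH_congr (m : ℕ) {c c' : (Fin m → G) → M} (h : c = c') (hc : c ∈ Zc G M m) :
    mkH G M m c hc = mkH G M m c' (h ▸ hc) := by subst h; rfl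

end GroupCohAux


theorem GroupCohAux.mkH_zero {G : Type} [Group G] {M : Type} [AddCommGroup M]
    [DistribMulAction G M] (m : ℕ) (h : (0 : (Fin m → G) → M) ∈ GroupCoh.Zc G M m) :
    GroupCoh.mkH G M m 0 h = 0 := rfl

open GroupCohAux


open GroupCoh

/-- Let `G` be a finite group, `B` a `G`-module free of finite rank over `ℤ_p`, and `A` a
`ℤ_p G`-submodule of `B` contained both in `f·B` and in `e·B`, where `e = exp H^m(G,B)` and
`f = exp H^{m+1}(G,A)`. Then there is a short exact sequence
`0 → H^m(G,B) → H^m(G,B/A) → H^{m+1}(G,A) → 0`; in particular the map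
`H^m(G,B) → H^m(G,B/A)` is injective and the connecting homomorphism
`H^m(G,B/A) → H^{m+1}(G,A)` is surjective. -/
theorem short_exact_sequence_of_submodule_of_smul (p : ℕ) [Fact p.Prime]
    (G : Type) [Group G] [Fintype G] (m : ℕ)
    (A : Type) [AddCommGroup A] [Module (PadicInt p) A] [DistribMulAction G A]
    [SMulCommClass G (PadicInt p) A]
    (B : Type) [AddCommGroup B] [Module (PadicInt p) B] [DistribMulAction G B]
    [SMulCommClass G (PadicInt p) B]
    [Module.Free (PadicInt p) B] [Module.Finite (PadicInt p) B]
    (Q : Type) [AddCommGroup Q] [Module (PadicInt p) Q] [DistribMulAction G Q]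
    [SMulCommClass G (PadicInt p) Q]
    (ι : A →ₗ[PadicInt p] B) (π : B →ₗ[PadicInt p] Q)
    (hι : ∀ (g : G) (a : A), ι (g • a) = g • ι a)
    (hπ : ∀ (g : G) (b : B), π (g • b) = g • π b)
    (hinj : Function.Injective ι) (hsurj : Function.Surjective π)
    (hexact : Function.Exact ι π)
    (f : ℕ) (hf : f = AddMonoid.exponent (H G A (m + 1)))
    (hAfB : ∀ a : A, ∃ b : B, ι a = f • b)
    (e : ℕ) (he : e = AddMonoid.exponent (H G B m))
    (hAeB : ∀ a : A, ∃ b : B, ι a = e • b) :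
    (∃ (F : H G B m →+ H G Q m) (δ : H G Q m →+ H G A (m + 1)),
      (∀ (c : (Fin m → G) → B) (hc : c ∈ Zc G B m) (hc' : (fun x => π (c x)) ∈ Zc G Q m),
          F (mkH G B m c hc) = mkH G Q m (fun x => π (c x)) hc') ∧
      (∀ (c : (Fin m → G) → B) (a : (Fin (m + 1) → G) → A)
          (ha : a ∈ Zc G A (m + 1)) (hq : (fun x => π (c x)) ∈ Zc G Q m),
          (∀ x, ι (a x) = d G B m c x) →
          δ (mkH G Q m (fun x => π (c x)) hq) = mkH G A (m + 1) a ha) ∧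
      Function.Injective F ∧ Function.Exact F δ ∧ Function.Surjective δ) := by
  classical
  have hπd : ∀ (n : ℕ) (c : (Fin n → G) → B),
      d G Q n (fun x => π (c x)) = fun x => π (d G B n c x) :=
    fun n c => d_comp (G := G) π.toAddMonoidHom hπ n c
  have hιd : ∀ (n : ℕ) (c : (Fin n → G) → A),
      d G B n (fun x => ι (c x)) = fun x => ι (d G A n c x) :=
    fun n c => d_comp (G := G) ι.toAddMonoidHom hι n c
  have hexact' : ∀ b : B, π b = 0 ↔ ∃ a : A, ι a = b :=
    fun b => (hexact b).trans Set.mem_range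
  have tf : ∀ (n : ℕ), n ≠ 0 → ∀ x : B, n • x = 0 → x = 0 := by
    intro n hn x hx
    have h1 : (n : PadicInt p) • x = 0 := by
      rw [Nat.cast_smul_eq_nsmul]; exact hx
    rcases smul_eq_zero.mp h1 with h | h
    · exact absurd (Nat.cast_eq_zero.mp h) hn
    · exact h
  -- the map F
  let Fz : Zc G B m →+ Zc G Q m :=
    { toFun := fun z => ⟨fun x => π (z.1 x), Zc_map π.toAddMonoidHom hπ m z.2⟩
      map_zero' := by
        apply Subtype.ext; funext x
        show π ((0 : (Fin m → G) → B) x) = (0 : (Fin m → G) → Q) x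
        simp
      map_add' := fun z₁ z₂ => by
        apply Subtype.ext; funext x
        show π ((z₁.1 + z₂.1) x) = π (z₁.1 x) + π (z₂.1 x)
        simp }
  have hFcond : (Bc G B m).addSubgroupOf (Zc G B m) ≤
      ((Bc G Q m).addSubgroupOf (Zc G Q m)).comap Fz := by
    intro z hz
    rw [AddSubgroup.mem_addSubgroupOf] at hz
    rw [AddSubgroup.mem_comap, AddSubgroup.mem_addSubgroupOf]
    exact Bc_map π.toAddMonoidHom hπ m hz
  let F : H G B m →+ H G Q m := QuotientAddGroup.map _ _ Fz hFcond
  have hFmk : ∀ (z : Zc G B m), F (QuotientAddGroup.mk z) = QuotientAddGroup.mk (Fz z) :=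
    fun z => rfl
  -- the connecting map
  have key : ∀ q : Zc G Q m, ∃ (c : (Fin m → G) → B) (a : (Fin (m + 1) → G) → A),
      (∀ x, π (c x) = q.1 x) ∧ (∀ x, ι (a x) = d G B m c x) ∧ a ∈ Zc G A (m + 1) := by
    intro q
    choose c hc using fun x => hsurj (q.1 x)
    have hdc : ∀ x, ∃ a : A, ι a = d G B m c x := by
      intro x
      rw [← hexact']
      have h1 : (fun y => π (c y)) = q.1 := funext hc
      have h2 := congrFun (hπd m c) x
      rw [h1] at h2
      have h3 : d G Q m q.1 = 0 := (mem_Zc_iff m q.1).1 q.2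
      rw [← h2, h3]
      rfl
    choose a ha using hdc
    refine ⟨c, a, hc, ha, ?_⟩
    rw [mem_Zc_iff]
    have h4 : (fun x => ι (a x)) = d G B m c := funext ha
    funext x
    show d G A (m + 1) a x = 0
    apply hinj
    have h5 := congrFun (hιd (m + 1) a) x
    rw [h4] at h5
    rw [← h5, d_d m c, map_zero]
    rfl
  choose cq aq hq1 hq2 hq3 using key
  set δfun : Zc G Q m → H G A (m + 1) := fun q => mkH G A (m + 1) (aq q) (hq3 q) with hδfun
  have char : ∀ (q : Zc G Q m) (c : (Fin m → G) → B) (a : (Fin (m + 1) → G) → A)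
      (ha : a ∈ Zc G A (m + 1)), (∀ x, π (c x) = q.1 x) → (∀ x, ι (a x) = d G B m c x) →
      δfun q = mkH G A (m + 1) a ha := by
    intro q c a ha h1 h2
    show mkH G A (m + 1) (aq q) (hq3 q) = mkH G A (m + 1) a ha
    rw [mkH_eq_iff]
    have hker : ∀ x, ∃ u : A, ι u = c x - cq q x := by
      intro x
      rw [← hexact', map_sub, h1 x, hq1 q x, sub_self]
    choose u hu using hker
    refine ⟨u, ?_⟩
    funext x
    apply hinj
    have h3 : (fun y => ι (u y)) = fun y => c y - cq q y := funext hu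
    have h4 := congrFun (hιd m u) x
    rw [h3] at h4
    have h5 : (fun y => c y - cq q y) = c - cq q := rfl
    rw [h5] at h4
    rw [← h4, map_sub (d G B m)]
    show d G B m c x - d G B m (cq q) x = ι ((a - aq q) x)
    rw [← h2 x, ← hq2 q x, Pi.sub_apply, map_sub]
  have hadd : ∀ q₁ q₂ : Zc G Q m, δfun (q₁ + q₂) = δfun q₁ + δfun q₂ := by
    intro q₁ q₂
    have hsumπ : ∀ x, π ((cq q₁ + cq q₂) x) = (q₁ + q₂).1 x := by
      intro x
      show π (cq q₁ x + cq q₂ x) = q₁.1 x + q₂.1 x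
      rw [map_add, hq1 q₁ x, hq1 q₂ x]
    have hsumι : ∀ x, ι ((aq q₁ + aq q₂) x) = d G B m (cq q₁ + cq q₂) x := by
      intro x
      show ι (aq q₁ x + aq q₂ x) = d G B m (cq q₁ + cq q₂) x
      rw [map_add ι, map_add (d G B m), Pi.add_apply, hq2 q₁ x, hq2 q₂ x]
    rw [char (q₁ + q₂) (cq q₁ + cq q₂) (aq q₁ + aq q₂) (add_mem (hq3 q₁) (hq3 q₂)) hsumπ hsumι]
    rfl
  let δ₀ : Zc G Q m →+ H G A (m + 1) := AddMonoidHom.mk' δfun hadd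
  have hlift : ∀ z ∈ (Bc G Q m).addSubgroupOf (Zc G Q m), δ₀ z = 0 := by
    intro z hz
    rw [AddSubgroup.mem_addSubgroupOf] at hz
    obtain ⟨c, hcB, hcπ, hcd⟩ := Bc_lift π.toAddMonoidHom hπ hsurj m hz
    have h0 : ∀ x, ι ((0 : (Fin (m + 1) → G) → A) x) = d G B m c x := by
      intro x; rw [hcd]
      show ι 0 = (0 : (Fin (m + 1) → G) → B) x
      simp
    show δfun z = 0
    rw [char z c 0 (zero_mem _) hcπ h0]
    exact mkH_zero _ _
  let δ : H G Q m →+ H G A (m + 1) := QuotientAddGroup.lift _ δ₀ hlift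
  have hδmk : ∀ z : Zc G Q m, δ (QuotientAddGroup.mk z) = δfun z := fun z => rfl
  refine ⟨F, δ, ?_, ?_, ?_, ?_, ?_⟩
  · -- description of F
    intro c hc hc'
    rfl
  · -- description of δ
    intro c a ha hq hd
    rw [show mkH G Q m (fun x => π (c x)) hq =
      QuotientAddGroup.mk (⟨fun x => π (c x), hq⟩ : Zc G Q m) from rfl, hδmk]
    exact char _ c a ha (fun x => rfl) hd
  · -- injectivity of F
    rw [injective_iff_map_eq_zero]
    intro y hy
    obtain ⟨z, rfl⟩ := QuotientAddGroup.mk_surjective y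
    erw [hFmk, QuotientAddGroup.eq_zero_iff, AddSubgroup.mem_addSubgroupOf] at hy
    have hB : (fun x => π (z.1 x)) ∈ Bc G Q m := hy
    obtain ⟨c₀, hc₀B, hc₀π, hc₀d⟩ := Bc_lift π.toAddMonoidHom hπ hsurj m hB
    have hker2 : ∀ x, ∃ a : A, ι a = z.1 x - c₀ x := by
      intro x
      rw [← hexact', map_sub, show π (c₀ x) = π (z.1 x) from hc₀π x, sub_self]
    choose a ha using hker2
    choose b hb using fun x => hAeB (a x)
    have hsub : ∀ x, z.1 x - c₀ x = e • b x := fun x => by rw [← ha x, hb x]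
    erw [QuotientAddGroup.eq_zero_iff, AddSubgroup.mem_addSubgroupOf]
    show z.1 ∈ Bc G B m
    by_cases he0 : e = 0
    · have hz0 : z.1 = c₀ := by
        funext x
        have h6 := hsub x
        rw [he0, zero_smul] at h6
        exact sub_eq_zero.mp h6
      rw [hz0]; exact hc₀B
    · have h8 : e • b = z.1 - c₀ := by
        funext y
        rw [Pi.smul_apply, Pi.sub_apply]
        exact (hsub y).symm
      have hz1 : d G B m z.1 = 0 := (mem_Zc_iff m z.1).1 z.2
      have h9 : e • d G B m b = 0 := by
        rw [← map_nsmul (d G B m) e b, h8, map_sub, hz1, hc₀d, sub_zero]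
      have hbZ : b ∈ Zc G B m := by
        rw [mem_Zc_iff]
        funext x
        show d G B m b x = 0
        apply tf e he0
        have h9x := congrFun h9 x
        rwa [Pi.smul_apply] at h9x
      have h10 : e • mkH G B m b hbZ = 0 := by
        rw [he]; exact AddMonoid.exponent_nsmul_eq_zero _
      have h11 : QuotientAddGroup.mk (e • (⟨b, hbZ⟩ : Zc G B m)) = (0 : H G B m) :=
        (map_nsmul (QuotientAddGroup.mk' ((Bc G B m).addSubgroupOf (Zc G B m)))
          e (⟨b, hbZ⟩ : Zc G B m)).trans h10
      erw [QuotientAddGroup.eq_zero_iff, AddSubgroup.mem_addSubgroupOf] at h11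
      have h12 : e • b ∈ Bc G B m := h11
      have h13 : z.1 = c₀ + e • b := by
        funext x
        rw [Pi.add_apply, Pi.smul_apply, ← hsub x, add_sub_cancel]
      rw [h13]
      exact add_mem hc₀B h12
  · -- exactness
    intro y
    obtain ⟨q, rfl⟩ := QuotientAddGroup.mk_surjective y
    constructor
    · intro h0
      rw [hδmk] at h0
      have h1 : aq q ∈ Bc G A (m + 1) :=
        (mkH_eq_zero_iff (m + 1) (aq q) (hq3 q)).1 h0
      obtain ⟨a', ha'⟩ := (mem_Bc_succ_iff m (aq q)).1 h1
      have hc₂Z : (fun x => cq q x - ι (a' x)) ∈ Zc G B m := by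
        rw [mem_Zc_iff]
        funext x
        show d G B m (fun y => cq q y - ι (a' y)) x = 0
        have t0 : (fun y => cq q y - ι (a' y)) = cq q - (fun y => ι (a' y)) := rfl
        rw [t0, map_sub, Pi.sub_apply, congrFun (hιd m a') x, congrFun ha' x, ← hq2 q x,
          sub_self]
      refine ⟨QuotientAddGroup.mk (⟨fun x => cq q x - ι (a' x), hc₂Z⟩ : Zc G B m), ?_⟩
      rw [hFmk]
      refine congrArg QuotientAddGroup.mk (Subtype.ext (funext fun x => ?_))
      show π (cq q x - ι (a' x)) = q.1 x
      rw [map_sub, hq1 q x, hexact.apply_apply_eq_zero, sub_zero]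
    · rintro ⟨x, hx⟩
      rw [← hx]
      obtain ⟨z, rfl⟩ := QuotientAddGroup.mk_surjective x
      rw [hFmk, hδmk]
      have hz1 : d G B m z.1 = 0 := (mem_Zc_iff m z.1).1 z.2
      rw [char (Fz z) z.1 0 (zero_mem _) (fun x => rfl) (fun x => by
        rw [hz1]
        show ι 0 = (0 : (Fin (m + 1) → G) → B) x
        simp)]
      exact mkH_zero _ _
  · -- surjectivity of δ
    intro y
    obtain ⟨za, rfl⟩ := QuotientAddGroup.mk_surjective y
    by_cases hf0 : f = 0
    · have hA0 : ∀ u : A, u = 0 := by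
        intro u
        obtain ⟨b', hb'⟩ := hAfB u
        rw [hf0, zero_smul] at hb'
        exact hinj (by rw [hb', map_zero])
      refine ⟨0, ?_⟩
      rw [map_zero]
      symm
      erw [QuotientAddGroup.eq_zero_iff, AddSubgroup.mem_addSubgroupOf]
      show za.1 ∈ Bc G A (m + 1)
      have hza0 : za.1 = 0 := funext fun x => hA0 _
      rw [hza0]
      exact zero_mem _
    · have h10 : f • QuotientAddGroup.mk za = (0 : H G A (m + 1)) := by
        rw [hf]; exact AddMonoid.exponent_nsmul_eq_zero _
      have h11 : QuotientAddGroup.mk (f • za) = (0 : H G A (m + 1)) :=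
        (map_nsmul (QuotientAddGroup.mk' ((Bc G A (m + 1)).addSubgroupOf (Zc G A (m + 1))))
          f za).trans h10
      erw [QuotientAddGroup.eq_zero_iff, AddSubgroup.mem_addSubgroupOf] at h11
      have h12 : f • za.1 ∈ Bc G A (m + 1) := h11
      obtain ⟨a', ha'⟩ := (mem_Bc_succ_iff m (f • za.1)).1 h12
      choose c hc using fun x => hAfB (a' x)
      have hdc : ∀ x, d G B m c x = ι (za.1 x) := by
        intro x
        have t2 : (fun y => ι (a' y)) = f • c := by
          funext y
          rw [hc y]
          rfl
        have t3 := congrFun (hιd m a') x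
        rw [t2] at t3
        have t4 : d G A m a' x = f • za.1 x := by rw [ha']; rfl
        rw [t4, map_nsmul ι] at t3
        have t5 : f • d G B m c x = f • ι (za.1 x) := by
          have t7 : d G B m (f • c) x = f • d G B m c x := by
            rw [map_nsmul (d G B m) f c]; rfl
          rw [← t7, t3]
        have t6 : f • (d G B m c x - ι (za.1 x)) = 0 := by
          rw [smul_sub, t5, sub_self]
        exact sub_eq_zero.mp (tf f hf0 _ t6)
      have hπcZ : (fun x => π (c x)) ∈ Zc G Q m := by
        rw [mem_Zc_iff, hπd m c]
        funext x
        show π (d G B m c x) = (0 : (Fin (m + 1) → G) → Q) x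
        rw [hdc x]
        simpa using hexact.apply_apply_eq_zero (za.1 x)
      refine ⟨QuotientAddGroup.mk (⟨fun x => π (c x), hπcZ⟩ : Zc G Q m), ?_⟩
      rw [hδmk, char ⟨fun x => π (c x), hπcZ⟩ c za.1 za.2 (fun x => rfl)
        (fun x => (hdc x).symm)]
      rfl
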